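/- arXiv:1510.04053 — 7 statements merged into one kernel-verified Lean document; each statement's English description precedes it below -/
import Mathlib

section
/- Let c1, c2, c3 be points of the Euclidean plane that are affinely independent, and let r1, r2, r3 ≥ 0 be radii such that the corresponding closed disks are pairwise disjoint, i.e. dist(ci, cj) > ri + rj for all i ≠ j. Then there exists a unique pair (p, ρ) with p a point of the plane and ρ > 0 such that dist(p, ci)^2 = ρ^2 + ri^2 for i = 1, 2, 3; that is, there is a unique circle orthogonal to all three given circles (where a circle of radius 0 is a point and orthogonality to it means passing through it). -/
open scoped RealInnerProductSpace

set_option maxHeartbeats 1600000 in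
/-- Three pairwise disjoint circles (possibly degenerate) with affinely
independent centers in the Euclidean plane admit a unique common orthogonal circle. -/
theorem unique_orthogonal_circle
    (c₁ c₂ c₃ : EuclideanSpace ℝ (Fin 2))
    (r₁ r₂ r₃ : ℝ)
    (hind : AffineIndependent ℝ ![c₁, c₂, c₃])
    (hr₁ : 0 ≤ r₁) (hr₂ : 0 ≤ r₂) (hr₃ : 0 ≤ r₃)
    (h₁₂ : dist c₁ c₂ > r₁ + r₂)
    (h₂₃ : dist c₂ c₃ > r₂ + r₃)
    (h₃₁ : dist c₃ c₁ > r₃ + r₁) :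
    ∃! pρ : EuclideanSpace ℝ (Fin 2) × ℝ,
      0 < pρ.2 ∧
      dist pρ.1 c₁ ^ 2 = pρ.2 ^ 2 + r₁ ^ 2 ∧
      dist pρ.1 c₂ ^ 2 = pρ.2 ^ 2 + r₂ ^ 2 ∧
      dist pρ.1 c₃ ^ 2 = pρ.2 ^ 2 + r₃ ^ 2 := by
  classical
  set u : EuclideanSpace ℝ (Fin 2) := c₁ - c₂ with hu
  set v : EuclideanSpace ℝ (Fin 2) := c₃ - c₂ with hv
  have hli : LinearIndependent ℝ ![u, v] := by
    rw [LinearIndependent.pair_iff]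
    intro s t hst
    have h := affineIndependent_iff.mp hind Finset.univ ![s, -(s + t), t]
      (by simp [Fin.sum_univ_three])
      (by
        rw [Fin.sum_univ_three]
        simp only [Matrix.cons_val_zero, Matrix.cons_val_one, Matrix.head_cons,
          Matrix.cons_val_two, Matrix.tail_cons]
        have h2 : s • c₁ + (-(s+t)) • c₂ + t • c₃ = s • u + t • v := by
          rw [hu, hv]; module
        rw [h2, hst])
    exact ⟨by simpa using h 0 (Finset.mem_univ _), by simpa using h 2 (Finset.mem_univ _)⟩
  set L : EuclideanSpace ℝ (Fin 2) →ₗ[ℝ] ℝ × ℝ :=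
    ((innerSL ℝ u).prod (innerSL ℝ v)).toLinearMap with hL
  have hLapp : ∀ p : EuclideanSpace ℝ (Fin 2), L p = (⟪u, p⟫, ⟪v, p⟫) := fun p => rfl
  have hspan : Submodule.span ℝ {u, v} = ⊤ := by
    have h1 : Submodule.span ℝ (Set.range ![u, v]) = Submodule.span ℝ {u, v} := by
      congr 1
      simp [Matrix.range_cons, Matrix.range_empty, Set.pair_comm]
    apply Submodule.eq_top_of_finrank_eq
    rw [← h1, finrank_span_eq_card hli, finrank_euclideanSpace_fin]
    simp
  have hinj : Function.Injective L := by
    rw [← LinearMap.ker_eq_bot, LinearMap.ker_eq_bot']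
    intro p hp
    have h1 : ⟪u, p⟫ = 0 := congrArg Prod.fst (hLapp p ▸ hp)
    have h2 : ⟪v, p⟫ = 0 := congrArg Prod.snd (hLapp p ▸ hp)
    have hmem : p ∈ (Submodule.span ℝ {u, v})ᗮ := by
      rw [Submodule.mem_orthogonal]
      intro x hx
      induction hx using Submodule.span_induction with
      | mem x hx =>
        rcases hx with hx | hx
        · subst hx; exact h1
        · simp only [Set.mem_singleton_iff] at hx; subst hx; exact h2
      | zero => simp
      | add x y _ _ hx hy => rw [inner_add_left, hx, hy]; ring
      | smul a x _ hx => rw [inner_smul_left, hx]; simp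
    rw [hspan, Submodule.top_orthogonal_eq_bot] at hmem
    simpa using hmem
  have hfr : Module.finrank ℝ (EuclideanSpace ℝ (Fin 2)) = Module.finrank ℝ (ℝ × ℝ) := by
    rw [finrank_euclideanSpace_fin]
    simp
  set e : EuclideanSpace ℝ (Fin 2) ≃ₗ[ℝ] ℝ × ℝ :=
    LinearMap.linearEquivOfInjective L hinj hfr with he
  have heapp : ∀ p : EuclideanSpace ℝ (Fin 2), e p = L p := fun p => rfl
  set t₁ : ℝ := (‖c₁‖ ^ 2 - ‖c₂‖ ^ 2 - r₁ ^ 2 + r₂ ^ 2) / 2 with ht₁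
  set t₂ : ℝ := (‖c₃‖ ^ 2 - ‖c₂‖ ^ 2 - r₃ ^ 2 + r₂ ^ 2) / 2 with ht₂
  set p : EuclideanSpace ℝ (Fin 2) := e.symm (t₁, t₂) with hp
  have hLp : L p = (t₁, t₂) := by
    rw [← heapp, hp, LinearEquiv.apply_symm_apply]
  have hp1 : ⟪u, p⟫ = t₁ := congrArg Prod.fst ((hLapp p).symm.trans hLp)
  have hp2 : ⟪v, p⟫ = t₂ := congrArg Prod.snd ((hLapp p).symm.trans hLp)
  clear_value p e
  have expand : ∀ (q c : EuclideanSpace ℝ (Fin 2)),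
      dist q c ^ 2 = ‖q‖ ^ 2 - 2 * ⟪c, q⟫ + ‖c‖ ^ 2 := by
    intro q c
    rw [dist_eq_norm, norm_sub_sq_real, real_inner_comm]
  have hinner : ∀ q : EuclideanSpace ℝ (Fin 2), ⟪u, q⟫ = ⟪c₁, q⟫ - ⟪c₂, q⟫ := fun q => by
    rw [hu, inner_sub_left]
  have hinner' : ∀ q : EuclideanSpace ℝ (Fin 2), ⟪v, q⟫ = ⟪c₃, q⟫ - ⟪c₂, q⟫ := fun q => by
    rw [hv, inner_sub_left]
  have h12 : dist p c₁ ^ 2 - r₁ ^ 2 = dist p c₂ ^ 2 - r₂ ^ 2 := by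
    have h3 := hinner p
    rw [hp1, ht₁] at h3
    rw [expand p c₁, expand p c₂]
    linarith
  have h32 : dist p c₃ ^ 2 - r₃ ^ 2 = dist p c₂ ^ 2 - r₂ ^ 2 := by
    have h3 := hinner' p
    rw [hp2, ht₂] at h3
    rw [expand p c₃, expand p c₂]
    linarith
  set k : ℝ := dist p c₂ ^ 2 - r₂ ^ 2 with hk
  have hkpos : 0 < k := by
    by_contra hle
    push_neg at hle
    have n1 : (0:ℝ) ≤ dist p c₁ := dist_nonneg
    have n2 : (0:ℝ) ≤ dist p c₂ := dist_nonneg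
    have d1 : dist p c₁ ≤ r₁ := by
      have hsq : dist p c₁ ^ 2 ≤ r₁ ^ 2 := by linarith
      exact (pow_le_pow_iff_left₀ n1 hr₁ (by norm_num)).mp hsq
    have d2 : dist p c₂ ≤ r₂ := by
      have hsq : dist p c₂ ^ 2 ≤ r₂ ^ 2 := by linarith
      exact (pow_le_pow_iff_left₀ n2 hr₂ (by norm_num)).mp hsq
    have htri : dist c₁ c₂ ≤ dist c₁ p + dist p c₂ := dist_triangle _ _ _
    rw [dist_comm c₁ p] at htri
    linarith
  refine ⟨(p, Real.sqrt k), ⟨Real.sqrt_pos.mpr hkpos, ?_, ?_, ?_⟩, ?_⟩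
  · show dist p c₁ ^ 2 = Real.sqrt k ^ 2 + r₁ ^ 2
    rw [Real.sq_sqrt hkpos.le]; linarith
  · show dist p c₂ ^ 2 = Real.sqrt k ^ 2 + r₂ ^ 2
    rw [Real.sq_sqrt hkpos.le]; linarith
  · show dist p c₃ ^ 2 = Real.sqrt k ^ 2 + r₃ ^ 2
    rw [Real.sq_sqrt hkpos.le]; linarith
  · rintro ⟨q, σ⟩ ⟨hσ, hq1, hq2, hq3⟩
    simp only at hσ hq1 hq2 hq3
    have hq12 : ⟪u, q⟫ = t₁ := by
      have e1 := expand q c₁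
      have e2 := expand q c₂
      have e3 := hinner q
      rw [ht₁]
      linarith
    have hq32 : ⟪v, q⟫ = t₂ := by
      have e1 := expand q c₃
      have e2 := expand q c₂
      have e3 := hinner' q
      rw [ht₂]
      linarith
    have hqp : q = p := by
      apply hinj
      rw [hLapp q, hq12, hq32, hLp]
    subst hqp
    have hσρ : σ = Real.sqrt k := by
      have hσ2 : σ ^ 2 = k := by rw [hk]; linarith
      rw [← hσ2, Real.sqrt_sq hσ.le]
    rw [Prod.mk.injEq]
    exact ⟨rfl, hσρ⟩
end

section
/- For every b > 0 and a ∈ ℝ one has (cosh b + exp a)/sinh b > cosh b / sinh b > 1. Define r > 0 by sinh r · sinh b = 1 and l > 0 by cosh l = (cosh b + exp a)/sinh b. Then l > r, and moreover the map (b, a) ↦ (r, l) is a bijection from (0, ∞) × ℝ onto { (r, l) ∈ ℝ × ℝ : 0 < r < l }. -/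
/-- The inverse hyperbolic cosine, `arcosh x = log (x + sqrt (x² - 1))`. -/
noncomputable def arcosh (x : ℝ) : ℝ := Real.log (x + Real.sqrt (x ^ 2 - 1))

lemma cosh_arcosh {x : ℝ} (hx : 1 ≤ x) : Real.cosh (arcosh x) = x := by
  have h1 : 0 ≤ x ^ 2 - 1 := by nlinarith
  have hs : Real.sqrt (x ^ 2 - 1) ^ 2 = x ^ 2 - 1 := Real.sq_sqrt h1
  have hs0 : 0 ≤ Real.sqrt (x ^ 2 - 1) := Real.sqrt_nonneg _
  have hpos : 0 < x + Real.sqrt (x ^ 2 - 1) := by linarith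
  rw [arcosh, Real.cosh_eq, Real.exp_log hpos, Real.exp_neg, Real.exp_log hpos]
  field_simp
  nlinarith [hs]

lemma arcosh_pos {x : ℝ} (hx : 1 < x) : 0 < arcosh x :=
  Real.log_pos (by have := Real.sqrt_nonneg (x ^ 2 - 1); linarith)

lemma arcosh_cosh {l : ℝ} (hl : 0 ≤ l) : arcosh (Real.cosh l) = l := by
  have h : Real.cosh l ^ 2 - 1 = Real.sinh l ^ 2 := by
    have := Real.cosh_sq l; nlinarith
  rw [arcosh, h, Real.sqrt_sq (Real.sinh_nonneg_iff.mpr hl), Real.cosh_add_sinh,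
    Real.log_exp]

lemma cosh_mul_sinh_eq {r b : ℝ} (hb : 0 < Real.sinh b)
    (h1 : Real.sinh r * Real.sinh b = 1) :
    Real.cosh r * Real.sinh b = Real.cosh b := by
  have h3 : Real.cosh r ^ 2 = 1 + Real.sinh r ^ 2 := by
    have := Real.cosh_sq r; linarith
  have h4 : Real.cosh b ^ 2 = 1 + Real.sinh b ^ 2 := by
    have := Real.cosh_sq b; linarith
  have hcrp : 0 < Real.cosh r := Real.cosh_pos r
  have hcb : 0 < Real.cosh b := Real.cosh_pos b
  have hsq : (Real.cosh r * Real.sinh b) ^ 2 = Real.cosh b ^ 2 := by nlinarith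
  have hp1 : 0 < Real.cosh r * Real.sinh b := mul_pos hcrp hb
  nlinarith [hsq, hp1, hcb]

lemma key_lt (b a r l : ℝ) (hb : 0 < b) (hr : 0 < r) (hl : 0 < l)
    (h1 : Real.sinh r * Real.sinh b = 1)
    (h2 : Real.cosh l = (Real.cosh b + Real.exp a) / Real.sinh b) : l > r := by
  have hsb : 0 < Real.sinh b := Real.sinh_pos_iff.mpr hb
  have hcr : Real.cosh r * Real.sinh b = Real.cosh b := cosh_mul_sinh_eq hsb h1
  have hcl : Real.cosh l * Real.sinh b = Real.cosh b + Real.exp a := by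
    field_simp at h2; linarith
  have hexp : 0 < Real.exp a := Real.exp_pos a
  have : Real.cosh r < Real.cosh l := by nlinarith
  have := (Real.cosh_lt_cosh).mp this
  rwa [abs_of_pos hr, abs_of_pos hl] at this

/-- For `b > 0` and `a ∈ ℝ`, `(cosh b + exp a)/sinh b > cosh b/sinh b > 1`;
if `r, l > 0` are defined by `sinh r * sinh b = 1` and `cosh l = (cosh b + exp a)/sinh b`,
then `l > r`; and `(b, a) ↦ (r, l)` is a bijection of `(0,∞) × ℝ` onto
`{(r, l) : 0 < r < l}`. -/
theorem f2_transition_properties :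
    (∀ b : ℝ, 0 < b → ∀ a : ℝ,
      (Real.cosh b + Real.exp a) / Real.sinh b > Real.cosh b / Real.sinh b ∧
      Real.cosh b / Real.sinh b > 1) ∧
    (∀ b a r l : ℝ, 0 < b → 0 < r → 0 < l →
      Real.sinh r * Real.sinh b = 1 →
      Real.cosh l = (Real.cosh b + Real.exp a) / Real.sinh b →
      l > r) ∧
    Set.BijOn
      (fun p : ℝ × ℝ =>
        (Real.arsinh (1 / Real.sinh p.1),
         arcosh ((Real.cosh p.1 + Real.exp p.2) / Real.sinh p.1)))
      (Set.Ioi 0 ×ˢ Set.univ)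
      {q : ℝ × ℝ | 0 < q.1 ∧ q.1 < q.2} := by
  have hineq : ∀ b : ℝ, 0 < b → ∀ a : ℝ,
      (Real.cosh b + Real.exp a) / Real.sinh b > Real.cosh b / Real.sinh b ∧
      Real.cosh b / Real.sinh b > 1 := by
    intro b hb a
    have hsb : 0 < Real.sinh b := Real.sinh_pos_iff.mpr hb
    have hexp : 0 < Real.exp a := Real.exp_pos a
    have h1 : Real.sinh b < Real.cosh b := by
      have h := Real.cosh_sub_sinh b
      have := Real.exp_pos (-b)
      linarith
    constructor
    · rw [gt_iff_lt, div_lt_div_iff₀ hsb hsb]; nlinarith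
    · exact (one_lt_div hsb).mpr h1
  refine ⟨hineq, fun b a r l hb hr hl h1 h2 => key_lt b a r l hb hr hl h1 h2, ?_, ?_, ?_⟩
  · -- MapsTo
    rintro ⟨b, a⟩ ⟨hb, -⟩
    simp only [Set.mem_Ioi] at hb
    have hsb : 0 < Real.sinh b := Real.sinh_pos_iff.mpr hb
    have ⟨hgt, h1⟩ := hineq b hb a
    set x := (Real.cosh b + Real.exp a) / Real.sinh b with hx
    have hx1 : 1 < x := lt_trans h1 hgt
    have hr : 0 < Real.arsinh (1 / Real.sinh b) :=
      Real.arsinh_pos_iff.mpr (by positivity)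
    have hl : 0 < arcosh x := arcosh_pos hx1
    refine ⟨hr, ?_⟩
    exact key_lt b a _ _ hb hr hl
      (by rw [Real.sinh_arsinh]; field_simp)
      (cosh_arcosh hx1.le)
  · -- InjOn
    rintro ⟨b1, a1⟩ ⟨hb1, -⟩ ⟨b2, a2⟩ ⟨hb2, -⟩ heq
    simp only [Set.mem_Ioi] at hb1 hb2
    have hsb1 : 0 < Real.sinh b1 := Real.sinh_pos_iff.mpr hb1
    have hsb2 : 0 < Real.sinh b2 := Real.sinh_pos_iff.mpr hb2
    simp only [Prod.mk.injEq] at heq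
    obtain ⟨h1, h2⟩ := heq
    have hb : b1 = b2 := by
      have h := Real.arsinh_injective h1
      field_simp at h
      exact Real.sinh_injective h.symm
    subst hb
    have hx1 : (1:ℝ) < (Real.cosh b1 + Real.exp a1) / Real.sinh b1 :=
      lt_trans (hineq b1 hb1 a1).2 (hineq b1 hb1 a1).1
    have hx2 : (1:ℝ) < (Real.cosh b1 + Real.exp a2) / Real.sinh b1 :=
      lt_trans (hineq b1 hb1 a2).2 (hineq b1 hb1 a2).1
    have hc := congrArg Real.cosh h2
    rw [cosh_arcosh hx1.le, cosh_arcosh hx2.le] at hc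
    have ha : a1 = a2 := by field_simp at hc; exact Real.exp_injective (by linarith)
    subst ha; rfl
  · -- SurjOn
    rintro ⟨r, l⟩ ⟨hr, hrl⟩
    simp only at hr hrl
    have hl : 0 < l := hr.trans hrl
    have hsr : 0 < Real.sinh r := Real.sinh_pos_iff.mpr hr
    have habs : |r| < |l| := by rw [abs_of_pos hr, abs_of_pos hl]; exact hrl
    have hcrl : Real.cosh r < Real.cosh l := Real.cosh_lt_cosh.mpr habs
    set b := Real.arsinh (1 / Real.sinh r) with hbdef
    have hb : 0 < b := Real.arsinh_pos_iff.mpr (by positivity)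
    have hsb : Real.sinh b = 1 / Real.sinh r := Real.sinh_arsinh _
    have hsbpos : 0 < Real.sinh b := by rw [hsb]; positivity
    have hcb : Real.cosh b = Real.cosh r / Real.sinh r := by
      have h1 : Real.sinh b * Real.sinh r = 1 := by rw [hsb]; field_simp
      have := cosh_mul_sinh_eq hsr h1
      field_simp
      linarith [this]
    set a := Real.log ((Real.cosh l - Real.cosh r) / Real.sinh r) with hadef
    have hea : Real.exp a = (Real.cosh l - Real.cosh r) / Real.sinh r :=
      Real.exp_log (div_pos (by linarith) hsr)
    refine ⟨(b, a), ⟨hb, Set.mem_univ _⟩, ?_⟩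
    have hfst : Real.arsinh (1 / Real.sinh b) = r := by
      rw [hsb, one_div_one_div, Real.arsinh_sinh]
    have hquot : (Real.cosh b + Real.exp a) / Real.sinh b = Real.cosh l := by
      rw [hsb, hcb, hea]
      field_simp
      ring
    have hsnd : arcosh ((Real.cosh b + Real.exp a) / Real.sinh b) = l := by
      rw [hquot]; exact arcosh_cosh hl.le
    simp only [Prod.mk.injEq]
    exact ⟨hfst, hsnd⟩
end

section
/- For every b_u, b_v > 0 and a > 0, define r_u, r_v > 0 by sinh r_u · sinh b_u = 1 and sinh r_v · sinh b_v = 1, and define l > 0 by cosh l = (cosh b_u · cosh b_v + cosh a)/(sinh b_u · sinh b_v) (the right-hand side is > 1, so l exists and is unique). Then l > r_u + r_v, and the map (b_u, b_v, a) ↦ (r_u, r_v, l) is a bijection from (0, ∞)^3 onto { (r_u, r_v, l) ∈ (0, ∞)^3 : l > r_u + r_v }. -/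
lemma arcosh_cosh_s6 {x : ℝ} (hx : 0 ≤ x) : arcosh (Real.cosh x) = x := by
  have hs : 0 ≤ Real.sinh x := by
    have := Real.sinh_lt_sinh (x := 0) (y := x)
    rcases eq_or_lt_of_le hx with h | h
    · simp [← h]
    · simpa [Real.sinh_zero] using le_of_lt ((Real.sinh_lt_sinh).2 h)
  have h1 : Real.cosh x ^ 2 - 1 = Real.sinh x ^ 2 := by
    have := Real.cosh_sq x; linarith
  rw [arcosh, h1, Real.sqrt_sq hs, Real.cosh_add_sinh, Real.log_exp]

/-- Injectivity of cosh on positives. -/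
lemma cosh_inj_pos {x y : ℝ} (hx : 0 < x) (hy : 0 < y)
    (h : Real.cosh x = Real.cosh y) : x = y := by
  have h1 : |x| ≤ |y| := Real.cosh_le_cosh.1 h.le
  have h2 : |y| ≤ |x| := Real.cosh_le_cosh.1 h.ge
  rw [abs_of_pos hx, abs_of_pos hy] at h1 h2
  linarith

/-- If `sinh r * sinh b = 1` then `cosh r * sinh b = cosh b`. -/
lemma cosh_ratio {r b : ℝ} (hr : 0 < r) (hb : 0 < b)
    (h : Real.sinh r * Real.sinh b = 1) : Real.cosh r * Real.sinh b = Real.cosh b := by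
  have hsb : 0 < Real.sinh b := Real.sinh_pos_iff.2 hb
  have h3 := Real.cosh_pos r
  have h4 := Real.cosh_pos b
  have hsq : (Real.cosh r * Real.sinh b) ^ 2 = Real.cosh b ^ 2 := by
    rw [mul_pow, Real.cosh_sq r, Real.cosh_sq b]
    linear_combination (Real.sinh r * Real.sinh b + 1) * h
  have h5 : Real.sqrt ((Real.cosh r * Real.sinh b) ^ 2) = Real.cosh r * Real.sinh b :=
    Real.sqrt_sq (mul_pos h3 hsb).le
  rw [hsq, Real.sqrt_sq h4.le] at h5
  exact h5.symm

lemma key_lt_s6 {bu bv a ru rv l : ℝ} (hbu : 0 < bu) (hbv : 0 < bv) (ha : 0 < a)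
    (hru : 0 < ru) (hrv : 0 < rv) (hl : 0 < l)
    (h1 : Real.sinh ru * Real.sinh bu = 1) (h2 : Real.sinh rv * Real.sinh bv = 1)
    (hcl : Real.cosh l = (Real.cosh bu * Real.cosh bv + Real.cosh a) /
      (Real.sinh bu * Real.sinh bv)) : ru + rv < l := by
  have hsbu : 0 < Real.sinh bu := Real.sinh_pos_iff.2 hbu
  have hsbv : 0 < Real.sinh bv := Real.sinh_pos_iff.2 hbv
  have hcu := cosh_ratio hru hbu h1
  have hcv := cosh_ratio hrv hbv h2
  have hca : 1 < Real.cosh a := Real.one_lt_cosh.2 (ne_of_gt ha)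
  have hL : Real.cosh l * (Real.sinh bu * Real.sinh bv)
      = Real.cosh bu * Real.cosh bv + Real.cosh a := by
    rw [hcl]; field_simp
  have hlt : Real.cosh (ru + rv) < Real.cosh l := by
    rw [Real.cosh_add]
    have hexp : (Real.cosh ru * Real.cosh rv + Real.sinh ru * Real.sinh rv) *
        (Real.sinh bu * Real.sinh bv) = Real.cosh bu * Real.cosh bv + 1 := by
      linear_combination (Real.cosh rv * Real.sinh bv) * hcu + Real.cosh bu * hcv +
        (Real.sinh rv * Real.sinh bv) * h1 + h2
    have hmul : (Real.cosh ru * Real.cosh rv + Real.sinh ru * Real.sinh rv) *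
        (Real.sinh bu * Real.sinh bv) < Real.cosh l * (Real.sinh bu * Real.sinh bv) := by
      rw [hexp, hL]; linarith
    exact lt_of_mul_lt_mul_right hmul (mul_pos hsbu hsbv).le
  have := Real.cosh_lt_cosh.1 hlt
  rw [abs_of_pos (by linarith), abs_of_pos hl] at this
  exact this

lemma X_gt_one {bu bv a : ℝ} (hbu : 0 < bu) (hbv : 0 < bv) (ha : 0 < a) :
    1 < (Real.cosh bu * Real.cosh bv + Real.cosh a) / (Real.sinh bu * Real.sinh bv) := by
  have hsbu : 0 < Real.sinh bu := Real.sinh_pos_iff.2 hbu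
  have hsbv : 0 < Real.sinh bv := Real.sinh_pos_iff.2 hbv
  rw [lt_div_iff₀ (mul_pos hsbu hsbv)]
  nlinarith [Real.cosh_sub bu bv, Real.cosh_pos (bu - bv), Real.cosh_pos a]

/-- For `b_u, b_v, a > 0`, the quantity
`(cosh b_u cosh b_v + cosh a)/(sinh b_u sinh b_v)` is `> 1` (so `l > 0` with `cosh l`
equal to it exists uniquely); with `r_u, r_v` defined by `sinh r * sinh b = 1` one has
`l > r_u + r_v`; and `(b_u, b_v, a) ↦ (r_u, r_v, l)` is a bijection from `(0,∞)³` onto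
`{(r_u, r_v, l) ∈ (0,∞)³ : l > r_u + r_v}`. -/
theorem f3_transition_properties :
    (∀ bu bv a : ℝ, 0 < bu → 0 < bv → 0 < a →
      1 < (Real.cosh bu * Real.cosh bv + Real.cosh a) /
            (Real.sinh bu * Real.sinh bv) ∧
      ∃! l : ℝ, 0 < l ∧
        Real.cosh l = (Real.cosh bu * Real.cosh bv + Real.cosh a) /
          (Real.sinh bu * Real.sinh bv)) ∧
    (∀ bu bv a ru rv l : ℝ, 0 < bu → 0 < bv → 0 < a → 0 < ru → 0 < rv → 0 < l →
      Real.sinh ru * Real.sinh bu = 1 → Real.sinh rv * Real.sinh bv = 1 →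
      Real.cosh l = (Real.cosh bu * Real.cosh bv + Real.cosh a) /
        (Real.sinh bu * Real.sinh bv) →
      l > ru + rv) ∧
    Set.BijOn
      (fun p : ℝ × ℝ × ℝ =>
        (Real.arsinh (1 / Real.sinh p.1),
         Real.arsinh (1 / Real.sinh p.2.1),
         arcosh ((Real.cosh p.1 * Real.cosh p.2.1 + Real.cosh p.2.2) /
           (Real.sinh p.1 * Real.sinh p.2.1))))
      (Set.Ioi 0 ×ˢ Set.Ioi 0 ×ˢ Set.Ioi 0)
      {q : ℝ × ℝ × ℝ | (0 < q.1 ∧ 0 < q.2.1 ∧ 0 < q.2.2) ∧ q.1 + q.2.1 < q.2.2} := by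
  refine ⟨?_, ?_, ?_, ?_, ?_⟩
  · -- X > 1 and unique l
    intro bu bv a hbu hbv ha
    have hX := X_gt_one hbu hbv ha
    refine ⟨hX, arcosh _, ⟨arcosh_pos hX, cosh_arcosh hX.le⟩, ?_⟩
    rintro y ⟨hy, hcy⟩
    exact cosh_inj_pos hy (arcosh_pos hX) (hcy.trans (cosh_arcosh hX.le).symm)
  · -- l > ru + rv
    intro bu bv a ru rv l hbu hbv ha hru hrv hl h1 h2 hcl
    exact key_lt_s6 hbu hbv ha hru hrv hl h1 h2 hcl
  · -- MapsTo
    rintro ⟨bu, bv, a⟩ ⟨hbu, hbv, ha⟩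
    simp only [Set.mem_Ioi] at hbu hbv ha
    have hsbu : 0 < Real.sinh bu := Real.sinh_pos_iff.2 hbu
    have hsbv : 0 < Real.sinh bv := Real.sinh_pos_iff.2 hbv
    have hX := X_gt_one hbu hbv ha
    have hru : 0 < Real.arsinh (1 / Real.sinh bu) :=
      Real.arsinh_pos_iff.2 (by positivity)
    have hrv : 0 < Real.arsinh (1 / Real.sinh bv) :=
      Real.arsinh_pos_iff.2 (by positivity)
    have hl : 0 < arcosh ((Real.cosh bu * Real.cosh bv + Real.cosh a) /
        (Real.sinh bu * Real.sinh bv)) := arcosh_pos hX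
    refine ⟨⟨hru, hrv, hl⟩, ?_⟩
    exact key_lt_s6 hbu hbv ha hru hrv hl
      (by rw [Real.sinh_arsinh]; field_simp)
      (by rw [Real.sinh_arsinh]; field_simp)
      (cosh_arcosh hX.le)
  · -- InjOn
    rintro ⟨bu, bv, a⟩ ⟨hbu, hbv, ha⟩ ⟨bu', bv', a'⟩ ⟨hbu', hbv', ha'⟩ h
    simp only [Set.mem_Ioi] at hbu hbv ha hbu' hbv' ha'
    simp only [Prod.mk.injEq] at h
    obtain ⟨h1, h2, h3⟩ := h
    have hsbu : 0 < Real.sinh bu := Real.sinh_pos_iff.2 hbu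
    have hsbv : 0 < Real.sinh bv := Real.sinh_pos_iff.2 hbv
    have hsbu' : 0 < Real.sinh bu' := Real.sinh_pos_iff.2 hbu'
    have hsbv' : 0 < Real.sinh bv' := Real.sinh_pos_iff.2 hbv'
    have e1 : bu = bu' := by
      have h := Real.arsinh_injective h1
      rw [one_div, one_div, inv_inj] at h
      exact Real.sinh_injective h
    have e2 : bv = bv' := by
      have h := Real.arsinh_injective h2
      rw [one_div, one_div, inv_inj] at h
      exact Real.sinh_injective h
    subst e1; subst e2
    have hX := X_gt_one hbu hbv ha
    have hX' := X_gt_one hbu hbv ha'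
    have hXX : (Real.cosh bu * Real.cosh bv + Real.cosh a) / (Real.sinh bu * Real.sinh bv)
        = (Real.cosh bu * Real.cosh bv + Real.cosh a') / (Real.sinh bu * Real.sinh bv) := by
      have := congrArg Real.cosh h3
      rwa [cosh_arcosh hX.le, cosh_arcosh hX'.le] at this
    have hca : Real.cosh a = Real.cosh a' := by
      have hd : Real.sinh bu * Real.sinh bv ≠ 0 := by positivity
      field_simp at hXX
      linarith
    exact Prod.ext rfl (Prod.ext rfl (cosh_inj_pos ha ha' hca))
  · -- SurjOn
    rintro ⟨ru, rv, l⟩ ⟨⟨hru, hrv, hl⟩, hsum⟩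
    have hsru : 0 < Real.sinh ru := Real.sinh_pos_iff.2 hru
    have hsrv : 0 < Real.sinh rv := Real.sinh_pos_iff.2 hrv
    set bu := Real.arsinh (1 / Real.sinh ru) with hbu_def
    set bv := Real.arsinh (1 / Real.sinh rv) with hbv_def
    have hbu : 0 < bu := Real.arsinh_pos_iff.2 (by positivity)
    have hbv : 0 < bv := Real.arsinh_pos_iff.2 (by positivity)
    have hsbu : Real.sinh bu = 1 / Real.sinh ru := Real.sinh_arsinh _
    have hsbv : Real.sinh bv = 1 / Real.sinh rv := Real.sinh_arsinh _
    have hsbu0 : 0 < Real.sinh bu := by rw [hsbu]; positivity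
    have hsbv0 : 0 < Real.sinh bv := by rw [hsbv]; positivity
    have hcbu : Real.cosh bu * Real.sinh ru = Real.cosh ru :=
      cosh_ratio hbu hru (by rw [hsbu]; field_simp)
    have hcbv : Real.cosh bv * Real.sinh rv = Real.cosh rv :=
      cosh_ratio hbv hrv (by rw [hsbv]; field_simp)
    -- cosh l > cosh (ru + rv)
    have hcoshlt : Real.cosh (ru + rv) < Real.cosh l := by
      rw [Real.cosh_lt_cosh, abs_of_pos (by linarith), abs_of_pos hl]
      exact hsum
    set Y := (Real.cosh l - Real.cosh ru * Real.cosh rv) / (Real.sinh ru * Real.sinh rv)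
      with hY_def
    have hY : 1 < Y := by
      rw [hY_def, lt_div_iff₀ (mul_pos hsru hsrv)]
      have := Real.cosh_add ru rv
      linarith
    set a := arcosh Y with ha_def
    have ha : 0 < a := arcosh_pos hY
    have hca : Real.cosh a = Y := cosh_arcosh hY.le
    refine ⟨(bu, bv, a), ⟨hbu, hbv, ha⟩, ?_⟩
    have c1 : Real.arsinh (1 / Real.sinh bu) = ru := by
      rw [hsbu, one_div_one_div, Real.arsinh_sinh]
    have c2 : Real.arsinh (1 / Real.sinh bv) = rv := by
      rw [hsbv, one_div_one_div, Real.arsinh_sinh]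
    have c3 : (Real.cosh bu * Real.cosh bv + Real.cosh a) /
        (Real.sinh bu * Real.sinh bv) = Real.cosh l := by
      rw [hca, hY_def, hsbu, hsbv]
      have hcburu : Real.cosh bu = Real.cosh ru / Real.sinh ru := by
        field_simp at hcbu ⊢; linarith
      have hcbvrv : Real.cosh bv = Real.cosh rv / Real.sinh rv := by
        field_simp at hcbv ⊢; linarith
      rw [hcburu, hcbvrv]
      field_simp
      ring
    show (Real.arsinh (1 / Real.sinh bu), Real.arsinh (1 / Real.sinh bv),
        arcosh ((Real.cosh bu * Real.cosh bv + Real.cosh a) /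
          (Real.sinh bu * Real.sinh bv))) = (ru, rv, l)
    rw [c1, c2, c3, arcosh_cosh_s6 hl.le]
end

section
/- Let a, b, c > 0. Then the three strict triangle inequalities a < b + c, b < c + a, c < a + b hold simultaneously if and only if |cosh a · cosh b − cosh c| < sinh a · sinh b; equivalently, cosh a · cosh b − sinh a · sinh b < cosh c < cosh a · cosh b + sinh a · sinh b. -/
/-- For `a, b, c > 0` the three strict triangle inequalities hold iff
`|cosh a * cosh b - cosh c| < sinh a * sinh b`, equivalently iff
`cosh a cosh b - sinh a sinh b < cosh c < cosh a cosh b + sinh a sinh b`. -/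
theorem triangle_ineq_iff_cosh
    (a b c : ℝ) (ha : 0 < a) (hb : 0 < b) (hc : 0 < c) :
    ((a < b + c ∧ b < c + a ∧ c < a + b) ↔
      |Real.cosh a * Real.cosh b - Real.cosh c| < Real.sinh a * Real.sinh b) ∧
    ((a < b + c ∧ b < c + a ∧ c < a + b) ↔
      (Real.cosh a * Real.cosh b - Real.sinh a * Real.sinh b < Real.cosh c ∧
       Real.cosh c < Real.cosh a * Real.cosh b + Real.sinh a * Real.sinh b)) := by
  have hsum : Real.cosh a * Real.cosh b + Real.sinh a * Real.sinh b = Real.cosh (a + b) :=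
    (Real.cosh_add a b).symm
  have hdiff : Real.cosh a * Real.cosh b - Real.sinh a * Real.sinh b = Real.cosh (a - b) :=
    (Real.cosh_sub a b).symm
  have h2 : (a < b + c ∧ b < c + a ∧ c < a + b) ↔
      (Real.cosh (a - b) < Real.cosh c ∧ Real.cosh c < Real.cosh (a + b)) := by
    rw [Real.cosh_lt_cosh, Real.cosh_lt_cosh, abs_of_pos hc,
      abs_of_pos (by linarith : (0:ℝ) < a + b)]
    constructor
    · rintro ⟨h1, h2, h3⟩
      exact ⟨abs_lt.2 ⟨by linarith, by linarith⟩, h3⟩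
    · rintro ⟨h1, h2⟩
      obtain ⟨h3, h4⟩ := abs_lt.1 h1
      exact ⟨by linarith, by linarith, h2⟩
  constructor
  · rw [h2, abs_lt]
    constructor
    · rintro ⟨h1, h3⟩; constructor <;> linarith
    · rintro ⟨h1, h3⟩; constructor <;> linarith
  · rw [h2, hdiff, hsum]
end

section
/- Define g : (0, ∞)^3 → ℝ by g(a, b, c) = arccos((cosh a · cosh b − cosh c)/(sinh a · sinh b)), where arccos is the real arccosine extended by the constant values π on (−∞, −1] and 0 on [1, ∞). Then g is continuous on (0, ∞)^3; g(a, b, c) = π if and only if c ≥ a + b; g(a, b, c) = 0 if and only if c ≤ |a − b|; and 0 < g(a, b, c) < π if and only if a, b, c satisfy the three strict triangle inequalities a < b + c, b < c + a, c < a + b. -/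
/-- The hyperbolic law-of-cosines angle function (with `Real.arccos` extended by `π`
on `(-∞,-1]` and `0` on `[1,∞)`). -/
noncomputable def hypAngle (a b c : ℝ) : ℝ :=
  Real.arccos ((Real.cosh a * Real.cosh b - Real.cosh c) / (Real.sinh a * Real.sinh b))

/-- `g` is continuous on `(0,∞)³`; `g = π` iff `c ≥ a + b`; `g = 0` iff
`c ≤ |a - b|`; and `0 < g < π` iff the strict triangle inequalities hold. -/
theorem hypAngle_properties :
    ContinuousOn (fun p : ℝ × ℝ × ℝ => hypAngle p.1 p.2.1 p.2.2)
      {p : ℝ × ℝ × ℝ | 0 < p.1 ∧ 0 < p.2.1 ∧ 0 < p.2.2} ∧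
    ∀ a b c : ℝ, 0 < a → 0 < b → 0 < c →
      ((hypAngle a b c = Real.pi ↔ a + b ≤ c) ∧
       (hypAngle a b c = 0 ↔ c ≤ |a - b|) ∧
       ((0 < hypAngle a b c ∧ hypAngle a b c < Real.pi) ↔
         (a < b + c ∧ b < c + a ∧ c < a + b))) := by
  constructor
  · apply Real.continuous_arccos.comp_continuousOn
    apply ContinuousOn.div
    · exact ((Real.continuous_cosh.comp continuous_fst).mul
        (Real.continuous_cosh.comp (continuous_fst.comp continuous_snd))).sub
        (Real.continuous_cosh.comp (continuous_snd.comp continuous_snd)) |>.continuousOn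
    · exact ((Real.continuous_sinh.comp continuous_fst).mul
        (Real.continuous_sinh.comp (continuous_fst.comp continuous_snd))).continuousOn
    · rintro p ⟨h1, h2, -⟩
      exact ne_of_gt (mul_pos (Real.sinh_pos_iff.mpr h1) (Real.sinh_pos_iff.mpr h2))
  · intro a b c ha hb hc
    have hs : 0 < Real.sinh a * Real.sinh b := mul_pos (Real.sinh_pos_iff.mpr ha) (Real.sinh_pos_iff.mpr hb)
    unfold hypAngle
    set X := (Real.cosh a * Real.cosh b - Real.cosh c) / (Real.sinh a * Real.sinh b) with hX
    have hle : X ≤ -1 ↔ a + b ≤ c := by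
      rw [hX, div_le_iff₀ hs]
      constructor
      · intro h
        have : Real.cosh (a + b) ≤ Real.cosh c := by
          rw [Real.cosh_add]; linarith
        rw [Real.cosh_le_cosh, abs_of_pos (by linarith), abs_of_pos hc] at this
        exact this
      · intro h
        have : Real.cosh (a + b) ≤ Real.cosh c := by
          rw [Real.cosh_le_cosh, abs_of_pos (by linarith), abs_of_pos hc]
          exact h
        rw [Real.cosh_add] at this; linarith
    have hge : 1 ≤ X ↔ c ≤ |a - b| := by
      rw [hX, le_div_iff₀ hs]
      constructor
      · intro h
        have : Real.cosh c ≤ Real.cosh (a - b) := by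
          rw [Real.cosh_sub]; linarith
        rw [Real.cosh_le_cosh, abs_of_pos hc] at this
        exact this
      · intro h
        have : Real.cosh c ≤ Real.cosh (a - b) := by
          rw [Real.cosh_le_cosh, abs_of_pos hc]; exact h
        rw [Real.cosh_sub] at this; linarith
    refine ⟨?_, ?_, ?_⟩
    · rw [Real.arccos_eq_pi, hle]
    · rw [Real.arccos_eq_zero, hge]
    · have hpi : Real.arccos X < Real.pi ↔ ¬ (X ≤ -1) := by
        rw [← Real.arccos_eq_pi, (Real.arccos_le_pi X).lt_iff_ne]
      rw [Real.arccos_pos, hpi,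
        show (X < 1) ↔ ¬ (1 ≤ X) from not_le.symm, hge, hle]
      rw [not_le, not_le]
      constructor
      · rintro ⟨h1, h2⟩
        rw [abs_lt] at h1
        exact ⟨by linarith [h1.1], by linarith [h1.2], by linarith⟩
      · rintro ⟨h1, h2, h3⟩
        exact ⟨abs_lt.2 ⟨by linarith, by linarith⟩, by linarith⟩
end

section
/- The function g(a, b, c) = arccos((cosh a · cosh b − cosh c)/(sinh a · sinh b)) is real-analytic on the open set { (a, b, c) ∈ (0, ∞)^3 : |a − b| < c < a + b } of positive triples satisfying the strict triangle inequalities. -/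
open Real

private lemma analyticAt_rsin (x : ℝ) : AnalyticAt ℝ Real.sin x := by
  have h1 : AnalyticAt ℝ (fun y : ℝ => (Complex.sin (y : ℂ)).re) x :=
    (Complex.reCLM.analyticAt _).comp
      (((Complex.differentiable_sin.analyticAt _).restrictScalars).comp
        (Complex.ofRealCLM.analyticAt x))
  exact h1.congr (Filter.Eventually.of_forall fun y => (Complex.sin_ofReal_re y))

private lemma analyticAt_rcosh (x : ℝ) : AnalyticAt ℝ Real.cosh x := by
  have h1 : AnalyticAt ℝ (fun y : ℝ => (Real.exp y + Real.exp (-y)) / 2) x := by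
    apply AnalyticAt.div
    · exact (analyticOnNhd_rexp x (Set.mem_univ x)).add
        ((analyticOnNhd_rexp (-x) (Set.mem_univ _)).comp (analyticAt_id.neg))
    · exact analyticAt_const
    · norm_num
  exact h1.congr (Filter.Eventually.of_forall fun y => (Real.cosh_eq y).symm)

private lemma analyticAt_rsinh (x : ℝ) : AnalyticAt ℝ Real.sinh x := by
  have h1 : AnalyticAt ℝ (fun y : ℝ => (Real.exp y - Real.exp (-y)) / 2) x := by
    apply AnalyticAt.div
    · exact (analyticOnNhd_rexp x (Set.mem_univ x)).sub
        ((analyticOnNhd_rexp (-x) (Set.mem_univ _)).comp (analyticAt_id.neg))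
    · exact analyticAt_const
    · norm_num
  exact h1.congr (Filter.Eventually.of_forall fun y => (Real.sinh_eq y).symm)

private lemma analyticAt_arcsin {x : ℝ} (h1 : -1 < x) (h2 : x < 1) :
    AnalyticAt ℝ Real.arcsin x := by
  set a := Real.arcsin x with ha_def
  have ha : a ∈ Set.Ioo (-(π / 2)) (π / 2) :=
    ⟨Real.neg_pi_div_two_lt_arcsin.2 h1, Real.arcsin_lt_pi_div_two.2 h2⟩
  have hcos : Real.cos a ≠ 0 := ne_of_gt (Real.cos_pos_of_mem_Ioo ha)
  obtain ⟨p, hp⟩ := analyticAt_rsin a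
  set i : ℝ ≃L[ℝ] ℝ := ContinuousLinearEquiv.unitsEquivAut ℝ (Units.mk0 (Real.cos a) hcos)
    with hi_def
  have hderiv : (p 1 fun _ => 1) = Real.cos a := by
    rw [← hp.deriv, Real.deriv_sin]
  have hp1 : p 1 = (continuousMultilinearCurryFin1 ℝ ℝ ℝ).symm (i : ℝ →L[ℝ] ℝ) := by
    refine ContinuousMultilinearMap.ext fun m => ?_
    have hm : m = fun _ => m 0 := funext fun j => by rw [Subsingleton.elim j 0]
    rw [hm, FormalMultilinearSeries.apply_eq_pow_smul_coeff]
    have : p.coeff 1 = Real.cos a := hderiv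
    simp [this, hi_def, ContinuousLinearEquiv.unitsEquivAut_apply, mul_comm]
  have hsymm := Real.sinPartialHomeomorph.hasFPowerSeriesAt_symm ha hp hp1
  have hx : Real.sin a = x := Real.sin_arcsin h1.le h2.le
  have hfa : Real.sinPartialHomeomorph a = x := hx
  rw [hfa] at hsymm
  have hcoe : ⇑Real.sinPartialHomeomorph.symm = Real.arcsin := rfl
  rw [hcoe] at hsymm
  exact ⟨_, hsymm⟩

private lemma analyticAt_arccos {x : ℝ} (h1 : -1 < x) (h2 : x < 1) :
    AnalyticAt ℝ Real.arccos x := by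
  have : AnalyticAt ℝ (fun y : ℝ => π / 2 - Real.arcsin y) x :=
    analyticAt_const.sub (analyticAt_arcsin h1 h2)
  exact this.congr (Filter.Eventually.of_forall fun y =>
    (Real.arccos_eq_pi_div_two_sub_arcsin y).symm)

/-- The hyperbolic law-of-cosines angle function is real-analytic on the
open set of positive triples satisfying the strict triangle inequalities. -/
theorem hypAngle_analyticOn :
    AnalyticOn ℝ
      (fun p : ℝ × ℝ × ℝ =>
        Real.arccos ((Real.cosh p.1 * Real.cosh p.2.1 - Real.cosh p.2.2) /
          (Real.sinh p.1 * Real.sinh p.2.1)))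
      {p : ℝ × ℝ × ℝ | 0 < p.1 ∧ 0 < p.2.1 ∧ 0 < p.2.2 ∧
        |p.1 - p.2.1| < p.2.2 ∧ p.2.2 < p.1 + p.2.1} := by
  apply AnalyticOnNhd.analyticOn
  rintro ⟨a, b, c⟩ ⟨ha, hb, hc, htri1, htri2⟩
  have hsa : 0 < Real.sinh a := Real.sinh_pos_iff.2 ha
  have hsb : 0 < Real.sinh b := Real.sinh_pos_iff.2 hb
  have hD : 0 < Real.sinh a * Real.sinh b := mul_pos hsa hsb
  have hq : AnalyticAt ℝ
      (fun p : ℝ × ℝ × ℝ => (Real.cosh p.1 * Real.cosh p.2.1 - Real.cosh p.2.2) /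
        (Real.sinh p.1 * Real.sinh p.2.1)) (a, b, c) := by
    apply AnalyticAt.div
    · exact (((analyticAt_rcosh a).comp analyticAt_fst).mul
        ((analyticAt_rcosh b).comp (analyticAt_fst.comp analyticAt_snd))).sub
        ((analyticAt_rcosh c).comp (x := (a, b, c)) (analyticAt_snd.comp analyticAt_snd))
    · exact ((analyticAt_rsinh a).comp analyticAt_fst).mul
        ((analyticAt_rsinh b).comp (x := (a, b, c)) (analyticAt_fst.comp analyticAt_snd))
    · exact ne_of_gt hD
  have hlow : Real.cosh (a - b) < Real.cosh c := by
    rw [Real.cosh_lt_cosh, abs_of_pos hc]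
    exact htri1
  have hhigh : Real.cosh c < Real.cosh (a + b) := by
    rw [Real.cosh_lt_cosh, abs_of_pos hc, abs_of_pos (by linarith : (0:ℝ) < a + b)]
    exact htri2
  rw [Real.cosh_sub] at hlow
  rw [Real.cosh_add] at hhigh
  have h1 : -1 < (Real.cosh a * Real.cosh b - Real.cosh c) /
      (Real.sinh a * Real.sinh b) := by
    rw [lt_div_iff₀ hD]
    nlinarith
  have h2 : (Real.cosh a * Real.cosh b - Real.cosh c) /
      (Real.sinh a * Real.sinh b) < 1 := by
    rw [div_lt_one hD]
    nlinarith
  exact AnalyticAt.comp (g := Real.arccos)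
    (f := fun p : ℝ × ℝ × ℝ => (Real.cosh p.1 * Real.cosh p.2.1 - Real.cosh p.2.2) /
      (Real.sinh p.1 * Real.sinh p.2.1)) (analyticAt_arccos h1 h2) hq
end

section
/- Let r1, r2, r3 ≥ 0 and l12, l23, l31 > 0 satisfy the strict triangle inequalities (l12 < l23 + l31, l23 < l31 + l12, l31 < l12 + l23) and the disjointness conditions l12 > r1 + r2, l23 > r2 + r3, l31 > r3 + r1. Then there exist points p1, p2, p3 in the Euclidean plane with dist(p1, p2) = l12, dist(p2, p3) = l23, dist(p3, p1) = l31; any such points are affinely independent, the closed disks centered at p1, p2, p3 with radii r1, r2, r3 are pairwise disjoint, and there exists a unique pair (q, ρ) with ρ > 0 and dist(q, pi)^2 = ρ^2 + ri^2 for i = 1, 2, 3, i.e. a unique circle orthogonal to the three vertex circles. In other words, every point of the polytope of edge lengths and vertex radii satisfying these inequalities is realized by a decorated Euclidean triangle. -/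
open scoped RealInnerProductSpace

private lemma aux_key_iff (q p p' : EuclideanSpace ℝ (Fin 2)) (r r' : ℝ) :
    dist q p' ^ 2 - r' ^ 2 = dist q p ^ 2 - r ^ 2 ↔
      ⟪p' - p, q⟫ = (‖p'‖ ^ 2 - r' ^ 2 - ‖p‖ ^ 2 + r ^ 2) / 2 := by
  rw [dist_eq_norm, dist_eq_norm, norm_sub_sq_real, norm_sub_sq_real, inner_sub_left,
    real_inner_comm p' q, real_inner_comm p q]
  constructor <;> intro h <;> linarith

private lemma aux_inner_existsUnique (v₁ v₂ : EuclideanSpace ℝ (Fin 2))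
    (h : ∀ c d : ℝ, c • v₁ + d • v₂ = 0 → c = 0 ∧ d = 0) (a b : ℝ) :
    ∃! q : EuclideanSpace ℝ (Fin 2), ⟪v₁, q⟫ = a ∧ ⟪v₂, q⟫ = b := by
  have hli : LinearIndependent ℝ ![v₁, v₂] := LinearIndependent.pair_iff.2 h
  have hspan : Submodule.span ℝ (Set.range ![v₁, v₂]) = ⊤ :=
    hli.span_eq_top_of_card_eq_finrank (by simp)
  have hrange : Set.range ![v₁, v₂] = ({v₁, v₂} : Set _) := by
    ext w; simp [Fin.exists_fin_two]; tauto
  have hker : ∀ q : EuclideanSpace ℝ (Fin 2), ⟪v₁, q⟫ = 0 → ⟪v₂, q⟫ = 0 → q = 0 := by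
    intro q h1 h2
    have hq : q ∈ Submodule.span ℝ ({v₁, v₂} : Set _) := by
      rw [← hrange, hspan]; trivial
    obtain ⟨c, d, hcd⟩ := Submodule.mem_span_pair.1 hq
    have hqq : ⟪q, q⟫ = 0 := by
      nth_rewrite 1 [← hcd]
      rw [inner_add_left, real_inner_smul_left, real_inner_smul_left, h1, h2]
      ring
    exact inner_self_eq_zero.1 hqq
  set L : EuclideanSpace ℝ (Fin 2) →ₗ[ℝ] ℝ × ℝ :=
    ((innerSL ℝ v₁).toLinearMap).prod ((innerSL ℝ v₂).toLinearMap) with hL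
  have hinj : Function.Injective L := by
    rw [← LinearMap.ker_eq_bot]
    apply (Submodule.eq_bot_iff _).2
    intro q hq
    rw [LinearMap.mem_ker, hL] at hq
    have hq1 : ⟪v₁, q⟫ = 0 := congrArg Prod.fst hq
    have hq2 : ⟪v₂, q⟫ = 0 := congrArg Prod.snd hq
    exact hker q hq1 hq2
  have hsurj : Function.Surjective L :=
    (LinearMap.injective_iff_surjective_of_finrank_eq_finrank (by simp)).1 hinj
  obtain ⟨q, hq⟩ := hsurj (a, b)
  refine ⟨q, ⟨congrArg Prod.fst hq, congrArg Prod.snd hq⟩, ?_⟩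
  rintro q' ⟨h1', h2'⟩
  have h1 : ⟪v₁, q⟫ = a := congrArg Prod.fst hq
  have h2 : ⟪v₂, q⟫ = b := congrArg Prod.snd hq
  have : q' - q = 0 := by
    apply hker
    · rw [inner_sub_right, h1', h1, sub_self]
    · rw [inner_sub_right, h2', h2, sub_self]
  exact sub_eq_zero.1 this

private lemma aux_pair (p₁ p₂ p₃ : EuclideanSpace ℝ (Fin 2))
    (h : ¬Collinear ℝ ({p₁, p₂, p₃} : Set _)) :
    ∀ c d : ℝ, c • (p₂ - p₁) + d • (p₃ - p₁) = 0 → c = 0 ∧ d = 0 := by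
  intro c d hcd
  by_contra hne
  apply h
  rw [collinear_iff_exists_forall_eq_smul_vadd]
  rcases not_and_or.1 hne with hc | hd
  · refine ⟨p₁, p₃ - p₁, ?_⟩
    intro p hp
    have hrel : p₂ - p₁ = (-d / c) • (p₃ - p₁) := by
      have h' : c • (p₂ - p₁) = (-d) • (p₃ - p₁) := by
        rw [neg_smul, eq_neg_iff_add_eq_zero]; exact hcd
      calc p₂ - p₁ = c⁻¹ • (c • (p₂ - p₁)) := by
              rw [smul_smul, inv_mul_cancel₀ hc, one_smul]
        _ = c⁻¹ • ((-d) • (p₃ - p₁)) := by rw [h']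
        _ = (-d / c) • (p₃ - p₁) := by rw [smul_smul]; ring_nf
    rcases hp with h | h | h <;> rw [h]
    · exact ⟨0, by simp⟩
    · refine ⟨-d / c, ?_⟩
      have : p₂ = (p₂ - p₁) + p₁ := by abel
      rw [this, hrel]; rfl
    · refine ⟨1, ?_⟩
      have : p₃ = (1 : ℝ) • (p₃ - p₁) + p₁ := by rw [one_smul]; abel
      exact this
  · refine ⟨p₁, p₂ - p₁, ?_⟩
    intro p hp
    have hrel : p₃ - p₁ = (-c / d) • (p₂ - p₁) := by
      have h' : d • (p₃ - p₁) = (-c) • (p₂ - p₁) := by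
        rw [neg_smul, eq_neg_iff_add_eq_zero, add_comm]; exact hcd
      calc p₃ - p₁ = d⁻¹ • (d • (p₃ - p₁)) := by
              rw [smul_smul, inv_mul_cancel₀ hd, one_smul]
        _ = d⁻¹ • ((-c) • (p₂ - p₁)) := by rw [h']
        _ = (-c / d) • (p₂ - p₁) := by rw [smul_smul]; ring_nf
    rcases hp with h | h | h <;> rw [h]
    · exact ⟨0, by simp⟩
    · refine ⟨1, ?_⟩
      have : p₂ = (1 : ℝ) • (p₂ - p₁) + p₁ := by rw [one_smul]; abel
      exact this
    · refine ⟨-c / d, ?_⟩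
      have : p₃ = (p₃ - p₁) + p₁ := by abel
      rw [this, hrel]; rfl

private lemma aux_noncol {p₁ p₂ p₃ : EuclideanSpace ℝ (Fin 2)} {l₁₂ l₂₃ l₃₁ : ℝ}
    (h12 : dist p₁ p₂ = l₁₂) (h23 : dist p₂ p₃ = l₂₃) (h31 : dist p₃ p₁ = l₃₁)
    (htri₁ : l₁₂ < l₂₃ + l₃₁) (htri₂ : l₂₃ < l₃₁ + l₁₂) (htri₃ : l₃₁ < l₁₂ + l₂₃) :
    ¬Collinear ℝ ({p₁, p₂, p₃} : Set _) := by
  intro hcol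
  rcases hcol.wbtw_or_wbtw_or_wbtw with hw | hw | hw
  · have h := hw.dist_add_dist
    rw [h12, h23, dist_comm p₁ p₃, h31] at h
    linarith
  · have h := hw.dist_add_dist
    rw [h23, h31, dist_comm p₂ p₁, h12] at h
    linarith
  · have h := hw.dist_add_dist
    rw [h31, h12, dist_comm p₃ p₂, h23] at h
    linarith

set_option maxHeartbeats 800000 in
/-- Any admissible vector of edge lengths and vertex radii (strict triangle
inequalities plus disjointness `l > r + r'`) is realized by a decorated Euclidean
triangle: vertices with the prescribed distances exist; any such vertices are affinely
independent; the closed vertex disks are pairwise disjoint; and there is a unique circle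
orthogonal to the three vertex circles. -/
theorem decorated_euclidean_triangle_realization
    (r₁ r₂ r₃ l₁₂ l₂₃ l₃₁ : ℝ)
    (hr₁ : 0 ≤ r₁) (hr₂ : 0 ≤ r₂) (hr₃ : 0 ≤ r₃)
    (hl₁₂ : 0 < l₁₂) (hl₂₃ : 0 < l₂₃) (hl₃₁ : 0 < l₃₁)
    (htri₁ : l₁₂ < l₂₃ + l₃₁) (htri₂ : l₂₃ < l₃₁ + l₁₂) (htri₃ : l₃₁ < l₁₂ + l₂₃)
    (hd₁₂ : l₁₂ > r₁ + r₂) (hd₂₃ : l₂₃ > r₂ + r₃) (hd₃₁ : l₃₁ > r₃ + r₁) :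
    (∃ p₁ p₂ p₃ : EuclideanSpace ℝ (Fin 2),
      dist p₁ p₂ = l₁₂ ∧ dist p₂ p₃ = l₂₃ ∧ dist p₃ p₁ = l₃₁) ∧
    ∀ p₁ p₂ p₃ : EuclideanSpace ℝ (Fin 2),
      dist p₁ p₂ = l₁₂ → dist p₂ p₃ = l₂₃ → dist p₃ p₁ = l₃₁ →
      AffineIndependent ℝ ![p₁, p₂, p₃] ∧
      Disjoint (Metric.closedBall p₁ r₁) (Metric.closedBall p₂ r₂) ∧
      Disjoint (Metric.closedBall p₂ r₂) (Metric.closedBall p₃ r₃) ∧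
      Disjoint (Metric.closedBall p₃ r₃) (Metric.closedBall p₁ r₁) ∧
      ∃! qρ : EuclideanSpace ℝ (Fin 2) × ℝ,
        0 < qρ.2 ∧
        dist qρ.1 p₁ ^ 2 = qρ.2 ^ 2 + r₁ ^ 2 ∧
        dist qρ.1 p₂ ^ 2 = qρ.2 ^ 2 + r₂ ^ 2 ∧
        dist qρ.1 p₃ ^ 2 = qρ.2 ^ 2 + r₃ ^ 2 := by
  constructor
  · -- existence of a triangle with the prescribed edge lengths
    set x : ℝ := (l₁₂ ^ 2 + l₃₁ ^ 2 - l₂₃ ^ 2) / (2 * l₁₂) with hxdef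
    have hxlt : x ^ 2 < l₃₁ ^ 2 := by
      rw [hxdef, div_pow, div_lt_iff₀ (by positivity)]
      have f1 : 0 < l₂₃ + l₃₁ - l₁₂ := by linarith
      have f2 : 0 < l₃₁ + l₁₂ - l₂₃ := by linarith
      have f3 : 0 < l₁₂ + l₂₃ - l₃₁ := by linarith
      have f4 : 0 < l₁₂ + l₂₃ + l₃₁ := by linarith
      nlinarith [mul_pos (mul_pos (mul_pos f1 f2) f3) f4]
    have hnn : 0 ≤ l₃₁ ^ 2 - x ^ 2 := by linarith
    set s : ℝ := Real.sqrt (l₃₁ ^ 2 - x ^ 2) with hsdef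
    have hs2 : s ^ 2 = l₃₁ ^ 2 - x ^ 2 := Real.sq_sqrt hnn
    have h2x : 2 * l₁₂ * x = l₁₂ ^ 2 + l₃₁ ^ 2 - l₂₃ ^ 2 := by
      rw [hxdef]; field_simp
    refine ⟨(WithLp.equiv 2 (Fin 2 → ℝ)).symm ![0, 0],
      (WithLp.equiv 2 (Fin 2 → ℝ)).symm ![l₁₂, 0],
      (WithLp.equiv 2 (Fin 2 → ℝ)).symm ![x, s], ?_, ?_, ?_⟩
    · rw [EuclideanSpace.dist_eq, Fin.sum_univ_two]
      simp only [WithLp.equiv_symm_apply, WithLp.ofLp_toLp, Matrix.cons_val_zero, Matrix.cons_val_one,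
        Matrix.head_cons, Real.dist_eq, sq_abs]
      rw [show (0 - l₁₂) ^ 2 + (0 - 0) ^ 2 = l₁₂ ^ 2 by ring, Real.sqrt_sq hl₁₂.le]
    · rw [EuclideanSpace.dist_eq, Fin.sum_univ_two]
      simp only [WithLp.equiv_symm_apply, WithLp.ofLp_toLp, Matrix.cons_val_zero, Matrix.cons_val_one,
        Matrix.head_cons, Real.dist_eq, sq_abs]
      rw [show (l₁₂ - x) ^ 2 + (0 - s) ^ 2 = l₂₃ ^ 2 by nlinarith [hs2, h2x],
        Real.sqrt_sq hl₂₃.le]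
    · rw [EuclideanSpace.dist_eq, Fin.sum_univ_two]
      simp only [WithLp.equiv_symm_apply, WithLp.ofLp_toLp, Matrix.cons_val_zero, Matrix.cons_val_one,
        Matrix.head_cons, Real.dist_eq, sq_abs]
      rw [show (x - 0) ^ 2 + (s - 0) ^ 2 = l₃₁ ^ 2 by nlinarith [hs2], Real.sqrt_sq hl₃₁.le]
  · intro p₁ p₂ p₃ h12 h23 h31
    have hnc : ¬Collinear ℝ ({p₁, p₂, p₃} : Set _) :=
      aux_noncol h12 h23 h31 htri₁ htri₂ htri₃
    have hpair := aux_pair p₁ p₂ p₃ hnc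
    refine ⟨affineIndependent_iff_not_collinear_set.2 hnc, ?_, ?_, ?_, ?_⟩
    · exact Metric.closedBall_disjoint_closedBall (by rw [h12]; exact hd₁₂)
    · exact Metric.closedBall_disjoint_closedBall (by rw [h23]; exact hd₂₃)
    · exact Metric.closedBall_disjoint_closedBall (by rw [h31]; exact hd₃₁)
    · -- unique orthogonal circle
      obtain ⟨q, ⟨hqa, hqb⟩, hquniq⟩ := aux_inner_existsUnique (p₂ - p₁) (p₃ - p₁) hpair
        ((‖p₂‖ ^ 2 - r₂ ^ 2 - ‖p₁‖ ^ 2 + r₁ ^ 2) / 2)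
        ((‖p₃‖ ^ 2 - r₃ ^ 2 - ‖p₁‖ ^ 2 + r₁ ^ 2) / 2)
      have hq2 : dist q p₂ ^ 2 - r₂ ^ 2 = dist q p₁ ^ 2 - r₁ ^ 2 :=
        (aux_key_iff q p₁ p₂ r₁ r₂).2 hqa
      have hq3 : dist q p₃ ^ 2 - r₃ ^ 2 = dist q p₁ ^ 2 - r₁ ^ 2 :=
        (aux_key_iff q p₁ p₃ r₁ r₃).2 hqb
      have ht : 0 < dist q p₁ ^ 2 - r₁ ^ 2 := by
        by_contra hle
        push_neg at hle
        have h1 : dist q p₁ ≤ r₁ := by nlinarith [dist_nonneg (x := q) (y := p₁)]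
        have h2 : dist q p₂ ≤ r₂ := by nlinarith [dist_nonneg (x := q) (y := p₂)]
        have htr := dist_triangle p₁ q p₂
        rw [dist_comm p₁ q, h12] at htr
        linarith
      set ρ : ℝ := Real.sqrt (dist q p₁ ^ 2 - r₁ ^ 2) with hρdef
      have hρ2 : ρ ^ 2 = dist q p₁ ^ 2 - r₁ ^ 2 := Real.sq_sqrt ht.le
      have hρpos : 0 < ρ := Real.sqrt_pos.2 ht
      refine ⟨(q, ρ), ⟨hρpos, show dist q p₁ ^ 2 = ρ ^ 2 + r₁ ^ 2 by linarith,
        show dist q p₂ ^ 2 = ρ ^ 2 + r₂ ^ 2 by linarith,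
        show dist q p₃ ^ 2 = ρ ^ 2 + r₃ ^ 2 by linarith⟩, ?_⟩
      rintro ⟨q', ρ'⟩ ⟨hρ'pos, e1, e2, e3⟩
      simp only at hρ'pos e1 e2 e3
      have hq'a : ⟪p₂ - p₁, q'⟫ = (‖p₂‖ ^ 2 - r₂ ^ 2 - ‖p₁‖ ^ 2 + r₁ ^ 2) / 2 :=
        (aux_key_iff q' p₁ p₂ r₁ r₂).1 (by linarith)
      have hq'b : ⟪p₃ - p₁, q'⟫ = (‖p₃‖ ^ 2 - r₃ ^ 2 - ‖p₁‖ ^ 2 + r₁ ^ 2) / 2 :=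
        (aux_key_iff q' p₁ p₃ r₁ r₃).1 (by linarith)
      have hqq : q' = q := hquniq q' ⟨hq'a, hq'b⟩
      have hρρ : ρ' = ρ := by
        have h1 : ρ' ^ 2 = ρ ^ 2 := by rw [hρ2, ← hqq]; linarith
        nlinarith
      rw [Prod.ext_iff]
      exact ⟨hqq, hρρ⟩
end
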